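/- Suppose for every pair of dyadic cubes $I\in\mathcal{D}^\mu$, $J\in\mathcal{D}^\nu$ with $\ell(I)=2^{-n}\ell(J)$ for some $n\ge0$, a bilinear form satisfies $|B(\Delta_I^\mu f,\Delta_J^\nu g)| \le A\,2^{-n\epsilon/2}\frac{\ell(J)^{\epsilon}}{(\operatorname{dist}(I,J)+\ell(J))^{d+\epsilon}}\mu(I)^{1/2}\nu(J)^{1/2}\|\Delta_I^\mu f\|_{L^2(\mu)}\|\Delta_J^\nu g\|_{L^2(\nu)}$, and suppose the kernel operators $\varphi\mapsto\int K_y(t,s)\varphi(t)d\mu(t)$, $K_y(t,s)=y^\epsilon/(y+|t-s|)^{d+\epsilon}$, are bounded $L^2(\mu)\to L^2(\nu)$ with norm $\le N$ uniformly in $y>0$. Then $\sum_{I,J:\,\ell(I)\le\ell(J)} |B(\Delta_I^\mu f,\Delta_J^\nu g)| \le c(A,\epsilon)\,N\,\|f\|_{L^2(\mu)}\|g\|_{L^2(\nu)}$ for all $f\in L^2(\mu)$, $g\in L^2(\nu)$. -/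

import Mathlib

open MeasureTheory Set
open scoped ENNReal
set_option maxHeartbeats 1000000
noncomputable section

/-- Points of `ℝ^d`. -/
abbrev Rd (d : ℕ) := Fin d → ℝ

/-- The half-open axis-parallel cube with lower-left corner `a` and side length `ℓ`. -/
def hcube {d : ℕ} (a : Rd d) (ℓ : ℝ) : Set (Rd d) := {x | ∀ i, a i ≤ x i ∧ x i < a i + ℓ}

/-- The (half-open) dyadic cube `∏ [k_i 2^n, (k_i+1) 2^n)`. -/
def dyC {d : ℕ} (n : ℤ) (k : Fin d → ℤ) : Set (Rd d) :=
  hcube (fun i => (k i : ℝ) * 2 ^ n) ((2 : ℝ) ^ n)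

/-- Distance between two sets: `inf { dist x y : x ∈ s, y ∈ t }`. -/
def setDist {X : Type*} [PseudoMetricSpace X] (s t : Set X) : ℝ :=
  sInf ((fun p : X × X => dist p.1 p.2) '' s ×ˢ t)

lemma mem_dyC {d : ℕ} {n : ℤ} {k : Fin d → ℤ} {x : Rd d} :
    x ∈ dyC n k ↔ ∀ i, (k i : ℝ) * 2 ^ n ≤ x i ∧ x i < (k i : ℝ) * 2 ^ n + 2 ^ n := Iff.rfl

lemma measurableSet_dyC {d : ℕ} (n : ℤ) (k : Fin d → ℤ) : MeasurableSet (dyC n k) := by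
  have : dyC n k = ⋂ i, (fun x : Rd d => x i) ⁻¹' (Ico ((k i : ℝ) * 2 ^ n) ((k i : ℝ) * 2 ^ n + 2 ^ n)) := by
    ext x; simp [mem_dyC, Set.mem_Ico]
  rw [this]
  exact MeasurableSet.iInter fun i => (measurable_pi_apply i) measurableSet_Ico

lemma existsUnique_dyC {d : ℕ} (n : ℤ) (x : Rd d) : ∃! k : Fin d → ℤ, x ∈ dyC n k := by
  have h2 : (0:ℝ) < 2 ^ n := by positivity
  refine ⟨fun i => ⌊x i / 2 ^ n⌋, ?_, fun k hk => ?_⟩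
  · intro i
    constructor
    · rw [← le_div_iff₀ h2] at *; exact Int.floor_le _
    · have := Int.lt_floor_add_one (x i / 2 ^ n)
      calc x i = (x i / 2^n) * 2^n := by field_simp
        _ < (⌊x i / 2 ^ n⌋ + 1) * 2^n := by
            apply mul_lt_mul_of_pos_right _ h2; push_cast; exact this
        _ = (⌊x i / 2 ^ n⌋:ℝ) * 2^n + 2^n := by ring
  · funext i
    have h1 : (k i : ℝ) * 2 ^ n ≤ x i := (hk i).1
    have h2' : x i < (k i : ℝ) * 2 ^ n + 2 ^ n := (hk i).2
    symm
    apply Int.floor_eq_iff.mpr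
    constructor
    · rw [le_div_iff₀ h2]; exact h1
    · rw [div_lt_iff₀ h2]; push_cast; nlinarith

lemma dyC_nonempty {d : ℕ} (n : ℤ) (k : Fin d → ℤ) : (dyC n k).Nonempty := by
  refine ⟨fun i => (k i : ℝ) * 2 ^ n, fun i => ⟨le_refl _, ?_⟩⟩
  have : (0:ℝ) < 2 ^ n := by positivity
  linarith

lemma dyC_disjoint {d : ℕ} (n : ℤ) {k k' : Fin d → ℤ} (h : k ≠ k') :
    Disjoint (dyC n k) (dyC (d := d) n k') := by
  rw [Set.disjoint_left]
  intro x hx hx'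
  obtain ⟨m, _, hu⟩ := existsUnique_dyC n x
  exact h ((hu k hx).trans (hu k' hx').symm)

lemma norm_sub_le_dyC {d : ℕ} {n : ℤ} {k : Fin d → ℤ} {t s : Rd d}
    (ht : t ∈ dyC n k) (hs : s ∈ dyC n k) : ‖t - s‖ ≤ 2 ^ n := by
  have h2 : (0:ℝ) < 2 ^ n := by positivity
  rw [pi_norm_le_iff_of_nonneg h2.le]
  intro i
  have h1t : (k i : ℝ) * 2 ^ n ≤ t i := (ht i).1
  have h2t : t i < (k i : ℝ) * 2 ^ n + 2 ^ n := (ht i).2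
  have h1s : (k i : ℝ) * 2 ^ n ≤ s i := (hs i).1
  have h2s : s i < (k i : ℝ) * 2 ^ n + 2 ^ n := (hs i).2
  rw [Pi.sub_apply, Real.norm_eq_abs, abs_le]
  constructor <;> linarith

lemma measure_dyC_lt_top {d : ℕ} {μ : Measure (Rd d)} [IsLocallyFiniteMeasure μ]
    (n : ℤ) (k : Fin d → ℤ) : μ (dyC n k) < ∞ := by
  have h2 : (0:ℝ) < 2 ^ n := by positivity
  have hsub : dyC n k ⊆ Metric.closedBall (fun i => (k i : ℝ) * 2 ^ n) (2 ^ n) := by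
    intro x hx
    rw [Metric.mem_closedBall, dist_pi_le_iff h2.le]
    intro i
    have h1 : (k i : ℝ) * 2 ^ n ≤ x i := (hx i).1
    have h2' : x i < (k i : ℝ) * 2 ^ n + 2 ^ n := (hx i).2
    rw [Real.dist_eq, abs_le]; constructor <;> linarith
  exact lt_of_le_of_lt (measure_mono hsub) (isCompact_closedBall _ _).measure_lt_top

lemma setDist_nonneg {X : Type*} [PseudoMetricSpace X] (s t : Set X) : 0 ≤ setDist s t := by
  apply Real.sInf_nonneg
  rintro x ⟨p, _, rfl⟩; exact dist_nonneg

lemma exists_close_pair {X : Type*} [PseudoMetricSpace X] {s t : Set X}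
    (hs : s.Nonempty) (ht : t.Nonempty) {δ : ℝ} (hδ : 0 < δ) :
    ∃ x ∈ s, ∃ y ∈ t, dist x y < setDist s t + δ := by
  obtain ⟨x, hx⟩ := hs; obtain ⟨y, hy⟩ := ht
  have hne : ((fun p : X × X => dist p.1 p.2) '' s ×ˢ t).Nonempty :=
    ⟨dist x y, ⟨(x, y), ⟨hx, hy⟩, rfl⟩⟩
  obtain ⟨r, ⟨p, ⟨hp1, hp2⟩, rfl⟩, hr⟩ := Real.lt_sInf_add_pos hne hδ
  exact ⟨p.1, hp1, p.2, hp2, hr⟩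

/-- The kernel. -/
def Kf (d : ℕ) (ε y : ℝ) (t s : Rd d) : ℝ≥0∞ :=
  ENNReal.ofReal (y ^ ε / (y + ‖t - s‖) ^ ((d : ℝ) + ε))

lemma Kf_continuous {d : ℕ} {ε y : ℝ} (hy : 0 < y) :
    Continuous (fun ts : Rd d × Rd d => Kf d ε y ts.1 ts.2) := by
  apply ENNReal.continuous_ofReal.comp
  apply Continuous.div continuous_const
  · apply Continuous.rpow_const
    · exact continuous_const.add ((continuous_fst.sub continuous_snd).norm)
    · intro x; left
      have : 0 < y + ‖x.1 - x.2‖ := by positivity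
      exact ne_of_gt this
  · intro x
    have : 0 < y + ‖x.1 - x.2‖ := by positivity
    positivity

lemma Kf_meas_left {d : ℕ} {ε y : ℝ} (hy : 0 < y) (s : Rd d) :
    Measurable (fun t => Kf d ε y t s) :=
  ((Kf_continuous (d := d) (ε := ε) hy).comp (continuous_id.prodMk continuous_const)).measurable

/-- Pointwise kernel lower bound on a pair of dyadic cubes. -/
lemma Kf_pointwise {d : ℕ} {ε : ℝ} (hε : 0 < ε) {j kk : ℤ} (hjk : j ≤ kk)
    {m m' : Fin d → ℤ} {t s : Rd d} (ht : t ∈ dyC j m) (hs : s ∈ dyC kk m') :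
    ENNReal.ofReal (((2:ℝ)^kk)^ε /
        (setDist (dyC j m) (dyC (d := d) kk m') + (2:ℝ)^kk) ^ ((d : ℝ) + ε))
      ≤ ENNReal.ofReal ((3:ℝ) ^ ((d:ℝ)+ε)) * Kf d ε ((2:ℝ)^kk) t s := by
  set y : ℝ := (2:ℝ)^kk with hy
  have hy0 : (0:ℝ) < y := by positivity
  set D : ℝ := setDist (dyC j m) (dyC (d := d) kk m') with hD
  have hD0 : 0 ≤ D := setDist_nonneg _ _
  have hp : (0:ℝ) < (d:ℝ) + ε := by positivity
  -- ‖t - s‖ ≤ 2y + D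
  have hts : ‖t - s‖ ≤ 2*y + D := by
    refine le_of_forall_pos_le_add fun δ hδ => ?_
    obtain ⟨t₀, ht₀, s₀, hs₀, hdist⟩ :=
      exists_close_pair (dyC_nonempty j m) (dyC_nonempty (d := d) kk m') hδ
    have h1 : ‖t - t₀‖ ≤ (2:ℝ)^j := norm_sub_le_dyC ht ht₀
    have h2 : ‖s₀ - s‖ ≤ y := norm_sub_le_dyC hs₀ hs
    have h3 : (2:ℝ)^j ≤ y := by
      rw [hy]; exact zpow_le_zpow_right₀ (by norm_num) hjk
    have h4 : ‖t - s‖ ≤ ‖t - t₀‖ + ‖t₀ - s₀‖ + ‖s₀ - s‖ := by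
      calc ‖t - s‖ = ‖(t - t₀) + (t₀ - s₀) + (s₀ - s)‖ := by ring_nf
        _ ≤ _ := norm_add₃_le
    rw [dist_eq_norm] at hdist
    linarith
  -- (y + ‖t-s‖)^p ≤ 3^p (D+y)^p
  have hbase : y + ‖t - s‖ ≤ 3 * (D + y) := by linarith
  have hpow : (y + ‖t - s‖) ^ ((d:ℝ)+ε) ≤ (3:ℝ)^((d:ℝ)+ε) * (D + y)^((d:ℝ)+ε) := by
    have h0 : (0:ℝ) ≤ y + ‖t - s‖ := by positivity
    calc (y + ‖t - s‖) ^ ((d:ℝ)+ε) ≤ (3 * (D + y)) ^ ((d:ℝ)+ε) :=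
          Real.rpow_le_rpow h0 hbase hp.le
      _ = (3:ℝ)^((d:ℝ)+ε) * (D + y)^((d:ℝ)+ε) :=
          Real.mul_rpow (by norm_num) (by linarith)
  rw [Kf, ← ENNReal.ofReal_mul (by positivity)]
  apply ENNReal.ofReal_le_ofReal
  have hA : (0:ℝ) < (D+y)^((d:ℝ)+ε) := Real.rpow_pos_of_pos (by linarith) _
  have hB : (0:ℝ) < (y + ‖t - s‖)^((d:ℝ)+ε) := Real.rpow_pos_of_pos (by positivity) _
  rw [← mul_div_assoc, div_le_div_iff₀ hA hB]
  have hyε : (0:ℝ) ≤ y ^ ε := Real.rpow_nonneg hy0.le ε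
  calc y ^ ε * (y + ‖t - s‖) ^ ((d:ℝ)+ε)
      ≤ y ^ ε * ((3:ℝ)^((d:ℝ)+ε) * (D + y)^((d:ℝ)+ε)) :=
        mul_le_mul_of_nonneg_left hpow hyε
    _ = 3 ^ ((d:ℝ)+ε) * y ^ ε * (D + y) ^ ((d:ℝ)+ε) := by ring

lemma tsum_ind_apply {d : ℕ} {j : ℤ} (c : (Fin d → ℤ) → ℝ≥0∞) (t : Rd d) {m₀ : Fin d → ℤ}
    (ht : t ∈ dyC j m₀) :
    ∑' m, (dyC j m).indicator (fun _ => c m) t = c m₀ := by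
  rw [tsum_eq_single m₀]
  · simp [Set.indicator_of_mem ht]
  · intro m hm
    apply Set.indicator_of_notMem
    intro htm
    obtain ⟨u, hu1, hu2⟩ := existsUnique_dyC j t
    exact hm ((hu2 m htm).trans (hu2 m₀ ht).symm)

lemma phi_meas {d : ℕ} (j : ℤ) (c : (Fin d → ℤ) → ℝ≥0∞) :
    Measurable (fun t => ∑' m, (dyC j m).indicator (fun _ => c m) t) :=
  Measurable.ennreal_tsum fun m => measurable_const.indicator (measurableSet_dyC _ _)

lemma expand_one {d : ℕ} (μ : Measure (Rd d)) (j : ℤ) (c : (Fin d → ℤ) → ℝ≥0∞)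
    (F : Rd d → ℝ≥0∞) (hF : Measurable F) :
    ∫⁻ t, F t * (∑' m, (dyC j m).indicator (fun _ => c m) t) ∂μ
      = ∑' m, c m * ∫⁻ t in dyC j m, F t ∂μ := by
  have h1 : ∀ t, F t * (∑' m, (dyC j m).indicator (fun _ => c m) t)
      = ∑' m, (dyC j m).indicator (fun t' => c m * F t') t := by
    intro t
    rw [← ENNReal.tsum_mul_left]
    congr 1; funext m
    by_cases h : t ∈ dyC j m
    · simp [Set.indicator_of_mem h, mul_comm]
    · simp [Set.indicator_of_notMem h]
  simp_rw [h1]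
  rw [lintegral_tsum (fun m => ((hF.const_mul _).indicator (measurableSet_dyC _ _)).aemeasurable)]
  congr 1; funext m
  rw [lintegral_indicator (measurableSet_dyC _ _)]
  exact lintegral_const_mul (c m) hF

lemma lintegral_phi_sq {d : ℕ} (μ : Measure (Rd d)) (j : ℤ) (c : (Fin d → ℤ) → ℝ≥0∞) :
    ∫⁻ t, (∑' m, (dyC j m).indicator (fun _ => c m) t) ^ 2 ∂μ
      = ∑' m, (c m) ^ 2 * μ (dyC j m) := by
  have h1 : ∀ t, (∑' m, (dyC j m).indicator (fun _ => c m) t) ^ 2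
      = ∑' m, (dyC j m).indicator (fun _ => (c m) ^ 2) t := by
    intro t
    obtain ⟨m₀, hm₀, _⟩ := existsUnique_dyC j t
    calc (∑' m, (dyC j m).indicator (fun _ => c m) t) ^ 2
        = (c m₀) ^ 2 := by rw [tsum_ind_apply c t hm₀]
      _ = ∑' m, (dyC j m).indicator (fun _ => (c m) ^ 2) t :=
          (tsum_ind_apply (fun m => (c m) ^ 2) t hm₀).symm
  rw [lintegral_congr h1]
  rw [lintegral_tsum (fun m => (measurable_const.indicator (measurableSet_dyC _ _)).aemeasurable)]
  congr 1; funext m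
  rw [lintegral_indicator (measurableSet_dyC _ _), setLIntegral_const]

lemma T_meas {d : ℕ} {ε y : ℝ} (hy : 0 < y) (μ : Measure (Rd d)) [SFinite μ]
    {I : Set (Rd d)} (hI : MeasurableSet I) :
    Measurable fun s => ∫⁻ t in I, Kf d ε y t s ∂μ := by
  have hK : Measurable fun p : Rd d × Rd d => Kf d ε y p.2 p.1 := by
    unfold Kf
    apply ENNReal.measurable_ofReal.comp
    apply Measurable.div measurable_const
    apply Measurable.pow _ measurable_const
    exact measurable_const.add ((measurable_snd.sub measurable_fst).norm)
  exact hK.lintegral_prod_right'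

lemma kernel_expand {d : ℕ} {ε y : ℝ} (hy : 0 < y) (μ ν : Measure (Rd d)) [SFinite μ]
    (j kk : ℤ) (c c' : (Fin d → ℤ) → ℝ≥0∞) :
    ∫⁻ s, (∫⁻ t, Kf d ε y t s * (∑' m, (dyC j m).indicator (fun _ => c m) t) ∂μ)
        * (∑' m', (dyC kk m').indicator (fun _ => c' m') s) ∂ν
      = ∑' m, c m * ∑' m', c' m'
          * ∫⁻ s in dyC kk m', (∫⁻ t in dyC j m, Kf d ε y t s ∂μ) ∂ν := by
  have step1 : ∀ s, ∫⁻ t, Kf d ε y t s * (∑' m, (dyC j m).indicator (fun _ => c m) t) ∂μ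
      = ∑' m, c m * ∫⁻ t in dyC j m, Kf d ε y t s ∂μ :=
    fun s => expand_one μ j c _ (Kf_meas_left hy s)
  simp_rw [step1, ← ENNReal.tsum_mul_right]
  rw [lintegral_tsum]
  · congr 1; funext m
    have : ∀ s, c m * (∫⁻ t in dyC j m, Kf d ε y t s ∂μ)
          * (∑' m', (dyC kk m').indicator (fun _ => c' m') s)
        = c m * ((∫⁻ t in dyC j m, Kf d ε y t s ∂μ)
          * (∑' m', (dyC kk m').indicator (fun _ => c' m') s)) := fun s => mul_assoc _ _ _
    simp_rw [this]
    rw [lintegral_const_mul (f := fun s => (∫⁻ t in dyC j m, Kf d ε y t s ∂μ) * (∑' m', (dyC kk m').indicator (fun _ => c' m') s)) _ (((T_meas hy μ (measurableSet_dyC j m)).mul (phi_meas kk c')))]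
    congr 1
    exact expand_one ν kk c' _ (T_meas hy μ (measurableSet_dyC j m))
  · intro m
    exact (((T_meas hy μ (measurableSet_dyC j m)).const_mul _).mul (phi_meas kk c')).aemeasurable

lemma half_mul {x v : ℝ≥0∞} (hv : v ≠ ∞) :
    v ^ (1/2:ℝ) * x = v * (x / v ^ (1/2:ℝ)) := by
  by_cases h0 : v = 0
  · subst h0
    rw [ENNReal.zero_rpow_of_pos (by norm_num)]
    simp
  · have h1 : v ^ (1/2:ℝ) ≠ 0 := by
      simp [ENNReal.rpow_eq_zero_iff, h0, hv]
    have h2 : v ^ (1/2:ℝ) ≠ ∞ := by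
      simp [ENNReal.rpow_eq_top_iff, h0, hv]
    have hvv : v * (x / v ^ (1/2:ℝ)) = (v ^ (1/2:ℝ) * v ^ (1/2:ℝ)) * (x / v ^ (1/2:ℝ)) := by
      rw [← ENNReal.rpow_add _ _ h0 hv]; norm_num
    rw [hvv, mul_assoc, ENNReal.mul_div_cancel h1 h2]

lemma half_sq {x v : ℝ≥0∞} : (x / v ^ (1/2:ℝ)) ^ 2 * v ≤ x ^ 2 := by
  rw [div_eq_mul_inv, mul_pow, ← ENNReal.inv_pow]
  have hvv : (v ^ (1/2:ℝ)) ^ 2 = v := by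
    rw [← ENNReal.rpow_natCast (v ^ (1/2:ℝ)) 2, ← ENNReal.rpow_mul]
    norm_num
  rw [hvv, mul_assoc]
  calc x ^ 2 * (v⁻¹ * v) ≤ x ^ 2 * 1 := mul_le_mul_right (ENNReal.inv_mul_le_one v) _
    _ = x ^ 2 := mul_one _

lemma kernel_intg_lb {d : ℕ} {ε : ℝ} (hε : 0 < ε) (μ ν : Measure (Rd d)) [SFinite μ]
    {j kk : ℤ} (hjk : j ≤ kk) (m m' : Fin d → ℤ) :
    ENNReal.ofReal (((2:ℝ)^kk)^ε /
        (setDist (dyC j m) (dyC (d := d) kk m') + (2:ℝ)^kk) ^ ((d:ℝ)+ε))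
      * μ (dyC j m) * ν (dyC kk m')
    ≤ ENNReal.ofReal ((3:ℝ)^((d:ℝ)+ε))
        * ∫⁻ s in dyC kk m', (∫⁻ t in dyC j m, Kf d ε ((2:ℝ)^kk) t s ∂μ) ∂ν := by
  have hy0 : (0:ℝ) < (2:ℝ)^kk := by positivity
  set C : ℝ≥0∞ := ENNReal.ofReal (((2:ℝ)^kk)^ε /
      (setDist (dyC j m) (dyC (d := d) kk m') + (2:ℝ)^kk) ^ ((d:ℝ)+ε)) with hC
  have inner : ∀ s ∈ dyC kk m',
      C * μ (dyC j m) ≤ ENNReal.ofReal ((3:ℝ)^((d:ℝ)+ε)) * ∫⁻ t in dyC j m, Kf d ε ((2:ℝ)^kk) t s ∂μ := by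
    intro s hs
    rw [← lintegral_const_mul _ (Kf_meas_left hy0 s), ← setLIntegral_const (dyC j m) C]
    exact setLIntegral_mono' (measurableSet_dyC _ _) fun t ht => Kf_pointwise hε hjk ht hs
  calc C * μ (dyC j m) * ν (dyC kk m')
      = ∫⁻ _ in dyC kk m', (C * μ (dyC j m)) ∂ν := by rw [setLIntegral_const]
    _ ≤ ∫⁻ s in dyC kk m', (ENNReal.ofReal ((3:ℝ)^((d:ℝ)+ε))
          * ∫⁻ t in dyC j m, Kf d ε ((2:ℝ)^kk) t s ∂μ) ∂ν :=
        setLIntegral_mono' (measurableSet_dyC _ _) inner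
    _ = ENNReal.ofReal ((3:ℝ)^((d:ℝ)+ε))
          * ∫⁻ s in dyC kk m', (∫⁻ t in dyC j m, Kf d ε ((2:ℝ)^kk) t s ∂μ) ∂ν :=
        lintegral_const_mul _ (T_meas hy0 μ (measurableSet_dyC j m))

lemma slice_bound {d : ℕ} {ε A : ℝ} (hε : 0 < ε) (hA : 0 ≤ A)
    (μ ν : Measure (Rd d)) [IsLocallyFiniteMeasure μ] [IsLocallyFiniteMeasure ν]
    (N : ℝ≥0∞) (a b : ℤ × (Fin d → ℤ) → ℝ≥0∞)
    (B : ℤ × (Fin d → ℤ) → ℤ × (Fin d → ℤ) → ℝ≥0∞)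
    (hB : ∀ p q : ℤ × (Fin d → ℤ), p.1 ≤ q.1 →
      B p q ≤ ENNReal.ofReal
          (A * ((2 : ℝ) ^ (p.1 - q.1)) ^ (ε / 2)
            * (((2 : ℝ) ^ q.1) ^ ε
                / (setDist (dyC p.1 p.2) (dyC q.1 q.2) + (2 : ℝ) ^ q.1) ^ ((d : ℝ) + ε)))
        * μ (dyC p.1 p.2) ^ (1/2 : ℝ) * ν (dyC q.1 q.2) ^ (1/2 : ℝ) * a p * b q)
    (hK : ∀ y : ℝ, 0 < y → ∀ φ ψ : Rd d → ℝ≥0∞, Measurable φ → Measurable ψ →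
      (∫⁻ s, (∫⁻ t, ENNReal.ofReal (y ^ ε / (y + ‖t - s‖) ^ ((d : ℝ) + ε)) * φ t ∂μ)
          * ψ s ∂ν)
        ≤ N * (∫⁻ t, φ t ^ 2 ∂μ) ^ (1/2 : ℝ) * (∫⁻ s, ψ s ^ 2 ∂ν) ^ (1/2 : ℝ))
    (j kk : ℤ) (hjk : j ≤ kk) :
    ∑' (m : Fin d → ℤ) (m' : Fin d → ℤ), B (j, m) (kk, m')
      ≤ ENNReal.ofReal (A * ((2:ℝ)^(j-kk))^(ε/2) * 3 ^ ((d:ℝ)+ε))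
          * (N * (∑' m : Fin d → ℤ, a (j, m) ^ 2) ^ (1/2:ℝ)
             * (∑' m' : Fin d → ℤ, b (kk, m') ^ 2) ^ (1/2:ℝ)) := by
  have hy0 : (0:ℝ) < (2:ℝ)^kk := by positivity
  have h2exp : (0:ℝ) ≤ ((2:ℝ)^(j-kk))^(ε/2) := Real.rpow_nonneg (by positivity) _
  set c : (Fin d → ℤ) → ℝ≥0∞ := fun m => a (j, m) / μ (dyC j m) ^ (1/2:ℝ) with hc
  set c' : (Fin d → ℤ) → ℝ≥0∞ := fun m' => b (kk, m') / ν (dyC kk m') ^ (1/2:ℝ) with hc'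
  set K0 : ℝ≥0∞ :=
    ENNReal.ofReal (A * ((2:ℝ)^(j-kk))^(ε/2)) * ENNReal.ofReal ((3:ℝ)^((d:ℝ)+ε)) with hK0
  set T : (Fin d → ℤ) → (Fin d → ℤ) → ℝ≥0∞ := fun m m' =>
    ∫⁻ s in dyC kk m', (∫⁻ t in dyC j m, Kf d ε ((2:ℝ)^kk) t s ∂μ) ∂ν with hT
  have pair : ∀ m m' : Fin d → ℤ, B (j, m) (kk, m')
      ≤ K0 * (c m * (c' m' * T m m')) := by
    intro m m'
    refine le_trans (hB (j, m) (kk, m') hjk) ?_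
    have hsplit : ENNReal.ofReal (A * ((2:ℝ)^((j,m).1 - (kk,m').1))^(ε/2)
          * (((2:ℝ)^(kk,m').1)^ε / (setDist (dyC (j,m).1 (j,m).2) (dyC (kk,m').1 (kk,m').2)
              + (2:ℝ)^(kk,m').1) ^ ((d:ℝ)+ε)))
        = ENNReal.ofReal (A * ((2:ℝ)^(j-kk))^(ε/2))
          * ENNReal.ofReal (((2:ℝ)^kk)^ε / (setDist (dyC j m) (dyC (d := d) kk m')
              + (2:ℝ)^kk) ^ ((d:ℝ)+ε)) := by
      rw [← ENNReal.ofReal_mul (by positivity)]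
    calc ENNReal.ofReal (A * ((2:ℝ)^((j,m).1 - (kk,m').1))^(ε/2)
          * (((2:ℝ)^(kk,m').1)^ε / (setDist (dyC (j,m).1 (j,m).2) (dyC (kk,m').1 (kk,m').2)
              + (2:ℝ)^(kk,m').1) ^ ((d:ℝ)+ε)))
          * μ (dyC (j,m).1 (j,m).2) ^ (1/2:ℝ) * ν (dyC (kk,m').1 (kk,m').2) ^ (1/2:ℝ)
          * a (j,m) * b (kk,m')
        = ENNReal.ofReal (A * ((2:ℝ)^(j-kk))^(ε/2))
            * ((ENNReal.ofReal (((2:ℝ)^kk)^ε / (setDist (dyC j m) (dyC (d := d) kk m')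
                + (2:ℝ)^kk) ^ ((d:ℝ)+ε)))
              * (μ (dyC j m) ^ (1/2:ℝ) * a (j,m)) * (ν (dyC kk m') ^ (1/2:ℝ) * b (kk,m'))) := by
          rw [hsplit]; ring
      _ = ENNReal.ofReal (A * ((2:ℝ)^(j-kk))^(ε/2))
            * ((ENNReal.ofReal (((2:ℝ)^kk)^ε / (setDist (dyC j m) (dyC (d := d) kk m')
                + (2:ℝ)^kk) ^ ((d:ℝ)+ε)))
              * (μ (dyC j m) * c m) * (ν (dyC kk m') * c' m')) := by
          rw [half_mul (measure_dyC_lt_top j m).ne, half_mul (measure_dyC_lt_top kk m').ne]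
      _ = ENNReal.ofReal (A * ((2:ℝ)^(j-kk))^(ε/2)) * (c m * c' m')
            * ((ENNReal.ofReal (((2:ℝ)^kk)^ε / (setDist (dyC j m) (dyC (d := d) kk m')
                + (2:ℝ)^kk) ^ ((d:ℝ)+ε))) * μ (dyC j m) * ν (dyC kk m')) := by
          ring
      _ ≤ ENNReal.ofReal (A * ((2:ℝ)^(j-kk))^(ε/2)) * (c m * c' m')
            * (ENNReal.ofReal ((3:ℝ)^((d:ℝ)+ε)) * T m m') :=
          mul_le_mul_right (kernel_intg_lb hε μ ν hjk m m') _
      _ = K0 * (c m * (c' m' * T m m')) := by rw [hK0]; ring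
  calc ∑' (m : Fin d → ℤ) (m' : Fin d → ℤ), B (j, m) (kk, m')
      ≤ ∑' (m : Fin d → ℤ) (m' : Fin d → ℤ), K0 * (c m * (c' m' * T m m')) :=
        ENNReal.tsum_le_tsum fun m => ENNReal.tsum_le_tsum fun m' => pair m m'
    _ = K0 * ∑' (m : Fin d → ℤ), c m * ∑' (m' : Fin d → ℤ), c' m' * T m m' := by
        simp_rw [ENNReal.tsum_mul_left]
    _ = K0 * ∫⁻ s, (∫⁻ t, Kf d ε ((2:ℝ)^kk) t s
            * (∑' m : Fin d → ℤ, (dyC j m).indicator (fun _ => c m) t) ∂μ)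
          * (∑' m' : Fin d → ℤ, (dyC kk m').indicator (fun _ => c' m') s) ∂ν := by
        rw [kernel_expand hy0 μ ν j kk c c']
    _ ≤ K0 * (N * (∫⁻ t, (∑' m : Fin d → ℤ, (dyC j m).indicator (fun _ => c m) t) ^ 2 ∂μ) ^ (1/2:ℝ)
          * (∫⁻ s, (∑' m' : Fin d → ℤ, (dyC kk m').indicator (fun _ => c' m') s) ^ 2 ∂ν) ^ (1/2:ℝ)) := by
        apply mul_le_mul_right
        exact hK ((2:ℝ)^kk) hy0 _ _ (phi_meas j c) (phi_meas kk c')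
    _ ≤ K0 * (N * (∑' m : Fin d → ℤ, a (j, m) ^ 2) ^ (1/2:ℝ)
          * (∑' m' : Fin d → ℤ, b (kk, m') ^ 2) ^ (1/2:ℝ)) := by
        apply mul_le_mul_right
        have hμ2 : (∫⁻ t, (∑' m : Fin d → ℤ, (dyC j m).indicator (fun _ => c m) t) ^ 2 ∂μ)
            ≤ ∑' m : Fin d → ℤ, a (j, m) ^ 2 := by
          rw [lintegral_phi_sq μ j c]
          exact ENNReal.tsum_le_tsum fun m => half_sq
        have hν2 : (∫⁻ s, (∑' m' : Fin d → ℤ, (dyC kk m').indicator (fun _ => c' m') s) ^ 2 ∂ν)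
            ≤ ∑' m' : Fin d → ℤ, b (kk, m') ^ 2 := by
          rw [lintegral_phi_sq ν kk c']
          exact ENNReal.tsum_le_tsum fun m' => half_sq
        exact mul_le_mul' (mul_le_mul' le_rfl (ENNReal.rpow_le_rpow hμ2 (by norm_num)))
          (ENNReal.rpow_le_rpow hν2 (by norm_num))
    _ = ENNReal.ofReal (A * ((2:ℝ)^(j-kk))^(ε/2) * 3 ^ ((d:ℝ)+ε))
          * (N * (∑' m : Fin d → ℤ, a (j, m) ^ 2) ^ (1/2:ℝ)
             * (∑' m' : Fin d → ℤ, b (kk, m') ^ 2) ^ (1/2:ℝ)) := by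
        rw [hK0, ← ENNReal.ofReal_mul (by positivity)]

lemma tsum_cs (f g : ℤ → ℝ≥0∞) :
    ∑' k, f k ^ (1/2:ℝ) * g k ^ (1/2:ℝ)
      ≤ (∑' k, f k) ^ (1/2:ℝ) * (∑' k, g k) ^ (1/2:ℝ) := by
  have hpq : Real.HolderConjugate 2 2 := Real.holderConjugate_iff.mpr ⟨by norm_num, by norm_num⟩
  have h := ENNReal.lintegral_mul_le_Lp_mul_Lq (Measure.count : Measure ℤ) hpq
    (f := fun k => f k ^ (1/2:ℝ)) (g := fun k => g k ^ (1/2:ℝ))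
    (measurable_of_countable _).aemeasurable (measurable_of_countable _).aemeasurable
  have hsq : ∀ x : ℝ≥0∞, (x ^ (1/2:ℝ)) ^ (2:ℝ) = x := by
    intro x
    rw [← ENNReal.rpow_mul]
    norm_num
  simp only [Pi.mul_apply, lintegral_count, hsq] at h
  convert h using 2 <;> norm_num
lemma shift_sum {d : ℕ} (a : ℤ × (Fin d → ℤ) → ℝ≥0∞) (n : ℤ) :
    ∑' (k : ℤ) (m : Fin d → ℤ), a (k - n, m) ^ 2 ≤ ∑' p, a p ^ 2 := by
  rw [← ENNReal.tsum_prod (f := fun k m => a (k - n, m) ^ 2)]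
  exact ENNReal.tsum_comp_le_tsum_of_injective
    (f := fun p : ℤ × (Fin d → ℤ) => (p.1 - n, p.2))
    (fun p q h => by
      obtain ⟨h1, h2⟩ := Prod.mk.injEq .. ▸ h
      exact Prod.ext (by omega) h2) (fun p => a p ^ 2)

def eqS {d : ℕ} : (ℕ × ℤ × (Fin d → ℤ) × (Fin d → ℤ)) ≃
    {pq : (ℤ × (Fin d → ℤ)) × (ℤ × (Fin d → ℤ)) // pq.1.1 ≤ pq.2.1} where
  toFun x := ⟨((x.2.1 - x.1, x.2.2.1), (x.2.1, x.2.2.2)), by simp⟩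
  invFun y := ((y.1.2.1 - y.1.1.1).toNat, y.1.2.1, y.1.1.2, y.1.2.2)
  left_inv x := by
    obtain ⟨n, k, m, m'⟩ := x
    have h1 : (k - (k - (n:ℤ))).toNat = n := by omega
    simp [h1]
  right_inv y := by
    obtain ⟨⟨⟨j, m⟩, ⟨kk, m'⟩⟩, h⟩ := y
    simp only at h
    have h1 : kk - (((kk - j).toNat : ℕ) : ℤ) = j := by omega
    apply Subtype.ext
    simp only [h1]

lemma geom_sum (ε : ℝ) (hε : 0 < ε) :
    ∑' n : ℕ, ENNReal.ofReal (((2:ℝ) ^ (-(n:ℤ))) ^ (ε/2))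
      = ENNReal.ofReal ((1 - ((2:ℝ)⁻¹) ^ (ε/2))⁻¹) := by
  have hx : ((2:ℝ)⁻¹) ^ (ε/2) < 1 :=
    Real.rpow_lt_one (by norm_num) (by norm_num) (by positivity)
  have hx0 : (0:ℝ) ≤ ((2:ℝ)⁻¹) ^ (ε/2) := Real.rpow_nonneg (by norm_num) _
  have hterm : ∀ n : ℕ, ((2:ℝ) ^ (-(n:ℤ))) ^ (ε/2) = (((2:ℝ)⁻¹) ^ (ε/2)) ^ n := by
    intro n
    rw [zpow_neg, zpow_natCast, ← inv_pow]
    rw [← Real.rpow_natCast ((2:ℝ)⁻¹) n, ← Real.rpow_mul (by norm_num),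
        mul_comm, Real.rpow_mul (by norm_num), Real.rpow_natCast]
  simp_rw [hterm, ENNReal.ofReal_pow hx0]
  rw [ENNReal.tsum_geometric]
  rw [ENNReal.ofReal_inv_of_pos (by linarith), ENNReal.ofReal_sub _ hx0, ENNReal.ofReal_one]


/-- Summation of the long-range interaction: if a (nonnegative) bilinear quantity
`B(I,J)` over pairs of dyadic cubes `I ∈ 𝒟^μ`, `J ∈ 𝒟^ν` with `ℓ(I) = 2^{-n} ℓ(J)`,
`n ≥ 0`, satisfies
`B(I,J) ≤ A 2^{-nε/2} ℓ(J)^ε (dist(I,J)+ℓ(J))^{-(d+ε)} μ(I)^{1/2} ν(J)^{1/2} a_I b_J`,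
where `a_I = ‖Δ_I^μ f‖` and `b_J = ‖Δ_J^ν g‖` satisfy `∑ a_I² ≤ ‖f‖²`, `∑ b_J² ≤ ‖g‖²`,
and the Poisson-type kernel operators with kernels `K_y(t,s) = y^ε (y+|t-s|)^{-(d+ε)}`
are bounded `L²(μ) → L²(ν)` with norm at most `N` uniformly in `y > 0`, then
`∑_{ℓ(I) ≤ ℓ(J)} B(I,J) ≤ c N (∑ a_I²)^{1/2} (∑ b_J²)^{1/2}` with `c = c(d,ε,A)`. -/
theorem stmt18 {d : ℕ} (hd : 0 < d) (ε A : ℝ) (hε : 0 < ε) (hA : 0 ≤ A) :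
    ∃ c : ℝ, 0 < c ∧
      ∀ (μ ν : Measure (Rd d)), IsLocallyFiniteMeasure μ → IsLocallyFiniteMeasure ν →
      ∀ (N : ℝ≥0∞) (a b : ℤ × (Fin d → ℤ) → ℝ≥0∞)
        (B : ℤ × (Fin d → ℤ) → ℤ × (Fin d → ℤ) → ℝ≥0∞),
        (∀ p q : ℤ × (Fin d → ℤ), p.1 ≤ q.1 →
          B p q ≤ ENNReal.ofReal
              (A * ((2 : ℝ) ^ (p.1 - q.1)) ^ (ε / 2)
                * (((2 : ℝ) ^ q.1) ^ ε
                    / (setDist (dyC p.1 p.2) (dyC q.1 q.2) + (2 : ℝ) ^ q.1) ^ ((d : ℝ) + ε)))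
            * μ (dyC p.1 p.2) ^ (1/2 : ℝ) * ν (dyC q.1 q.2) ^ (1/2 : ℝ) * a p * b q) →
        (∀ y : ℝ, 0 < y → ∀ φ ψ : Rd d → ℝ≥0∞, Measurable φ → Measurable ψ →
          (∫⁻ s, (∫⁻ t, ENNReal.ofReal (y ^ ε / (y + ‖t - s‖) ^ ((d : ℝ) + ε)) * φ t ∂μ)
              * ψ s ∂ν)
            ≤ N * (∫⁻ t, φ t ^ 2 ∂μ) ^ (1/2 : ℝ) * (∫⁻ s, ψ s ^ 2 ∂ν) ^ (1/2 : ℝ)) →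
        ∑' pq : {pq : (ℤ × (Fin d → ℤ)) × (ℤ × (Fin d → ℤ)) // pq.1.1 ≤ pq.2.1},
            B (pq : (ℤ × (Fin d → ℤ)) × (ℤ × (Fin d → ℤ))).1 (pq : (ℤ × (Fin d → ℤ)) × (ℤ × (Fin d → ℤ))).2
          ≤ ENNReal.ofReal c * N * (∑' p, a p ^ 2) ^ (1/2 : ℝ) * (∑' q, b q ^ 2) ^ (1/2 : ℝ) := by
  have hx : ((2:ℝ)⁻¹) ^ (ε/2) < 1 :=
    Real.rpow_lt_one (by norm_num) (by norm_num) (by positivity)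
  have h3 : (0:ℝ) < 3 ^ ((d:ℝ)+ε) := by positivity
  set c₀ : ℝ := A * 3 ^ ((d:ℝ)+ε) * (1 - ((2:ℝ)⁻¹) ^ (ε/2))⁻¹ with hc₀
  have hc₀0 : 0 ≤ c₀ := by
    apply mul_nonneg (mul_nonneg hA h3.le) (inv_nonneg.mpr (by linarith))
  refine ⟨c₀ + 1, by linarith, ?_⟩
  intro μ ν hμ hν N a b B hB hK
  set X : ℝ≥0∞ := (∑' p, a p ^ 2) ^ (1/2 : ℝ) with hX
  set Y : ℝ≥0∞ := (∑' q, b q ^ 2) ^ (1/2 : ℝ) with hY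
  set C : ℕ → ℝ≥0∞ :=
    fun n => ENNReal.ofReal (A * ((2:ℝ)^(-(n:ℤ)))^(ε/2) * 3 ^ ((d:ℝ)+ε)) with hC
  have hre : (∑' pq : {pq : (ℤ × (Fin d → ℤ)) × (ℤ × (Fin d → ℤ)) // pq.1.1 ≤ pq.2.1},
        B (pq : (ℤ × (Fin d → ℤ)) × (ℤ × (Fin d → ℤ))).1
          (pq : (ℤ × (Fin d → ℤ)) × (ℤ × (Fin d → ℤ))).2)
      = ∑' (n : ℕ) (k : ℤ) (m : Fin d → ℤ) (m' : Fin d → ℤ), B (k - n, m) (k, m') := by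
    rw [← Equiv.tsum_eq (eqS (d := d)) (fun pq =>
      B (pq : (ℤ × (Fin d → ℤ)) × (ℤ × (Fin d → ℤ))).1
        (pq : (ℤ × (Fin d → ℤ)) × (ℤ × (Fin d → ℤ))).2)]
    rw [ENNReal.tsum_prod']
    apply tsum_congr; intro n
    rw [ENNReal.tsum_prod']
    apply tsum_congr; intro k
    rw [ENNReal.tsum_prod']
    apply tsum_congr; intro m
    apply tsum_congr; intro m'
    rfl
  rw [hre]
  have hslice : ∀ (n : ℕ) (k : ℤ),
      (∑' (m : Fin d → ℤ) (m' : Fin d → ℤ), B (k - n, m) (k, m'))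
        ≤ (C n * N) * ((∑' m : Fin d → ℤ, a (k - (n:ℤ), m) ^ 2) ^ (1/2:ℝ)
            * (∑' m' : Fin d → ℤ, b (k, m') ^ 2) ^ (1/2:ℝ)) := by
    intro n k
    have h := slice_bound hε hA μ ν N a b B hB hK (k - n) k (by omega)
    have harg : (k - (n:ℤ)) - k = -(n:ℤ) := by ring
    rw [harg] at h
    exact h.trans (le_of_eq (by rw [hC]; ring))
  calc ∑' (n : ℕ) (k : ℤ) (m : Fin d → ℤ) (m' : Fin d → ℤ), B (k - n, m) (k, m')
      ≤ ∑' (n : ℕ) (k : ℤ), (C n * N) * ((∑' m : Fin d → ℤ, a (k - (n:ℤ), m) ^ 2) ^ (1/2:ℝ)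
            * (∑' m' : Fin d → ℤ, b (k, m') ^ 2) ^ (1/2:ℝ)) :=
        ENNReal.tsum_le_tsum fun n => ENNReal.tsum_le_tsum fun k => hslice n k
    _ ≤ ∑' (n : ℕ), (C n * N) * (X * Y) := by
        apply ENNReal.tsum_le_tsum
        intro n
        rw [ENNReal.tsum_mul_left]
        apply mul_le_mul_right
        refine le_trans (tsum_cs (fun k => ∑' m : Fin d → ℤ, a (k - (n:ℤ), m) ^ 2)
          (fun k => ∑' m' : Fin d → ℤ, b (k, m') ^ 2)) ?_
        apply mul_le_mul'
        · exact ENNReal.rpow_le_rpow (shift_sum a n) (by norm_num)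
        · apply le_of_eq
          rw [hY, ENNReal.tsum_prod' (f := fun q : ℤ × (Fin d → ℤ) => b q ^ 2)]
    _ = (∑' (n : ℕ), C n) * (N * (X * Y)) := by
        simp_rw [mul_assoc]
        rw [ENNReal.tsum_mul_right]
    _ ≤ ENNReal.ofReal (c₀ + 1) * N * X * Y := by
        have hsum : (∑' (n : ℕ), C n) = ENNReal.ofReal c₀ := by
          have hCn : ∀ n : ℕ, C n = ENNReal.ofReal (A * 3 ^ ((d:ℝ)+ε))
              * ENNReal.ofReal (((2:ℝ)^(-(n:ℤ)))^(ε/2)) := by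
            intro n
            rw [hC, ← ENNReal.ofReal_mul (by positivity)]
            congr 1
            ring
          simp_rw [hCn]
          rw [ENNReal.tsum_mul_left, geom_sum ε hε, ← ENNReal.ofReal_mul (by positivity)]
        rw [hsum]
        calc ENNReal.ofReal c₀ * (N * (X * Y))
            ≤ ENNReal.ofReal (c₀ + 1) * (N * (X * Y)) :=
              mul_le_mul_left (ENNReal.ofReal_le_ofReal (by linarith)) _
          _ = ENNReal.ofReal (c₀ + 1) * N * X * Y := by ring
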